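/- Let λ be a symplectic partition of 2n and ν = λ + s(λ). Then λ ≤ ν in the dominance order, and for every special symplectic partition μ of 2n with λ ≤ μ one has ν ≤ μ. In other words, ν = sp(λ) is the smallest special symplectic partition dominating λ. -/
import Mathlib


open Classical

noncomputable section

/-- A partition: weakly decreasing on indices `j ≥ 1` (parts are `l 1 ≥ l 2 ≥ ...`). -/
def IsPartition (l : ℕ → ℕ) : Prop := ∀ j, 1 ≤ j → l (j + 1) ≤ l j

/-- The parts vanish eventually (finitely many nonzero parts). -/
def EventuallyZero (l : ℕ → ℕ) : Prop := ∃ N, ∀ j, N ≤ j → l j = 0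

/-- Multiplicity of `i` as a part of `l`. -/
def mult (l : ℕ → ℕ) (i : ℕ) : ℕ := Nat.card {j : ℕ | 1 ≤ j ∧ l j = i}

/-- The sum of the parts of `l`. -/
def psum (l : ℕ → ℕ) : ℕ := ∑ᶠ j : ℕ, l (j + 1)

/-- Symplectic: every odd part occurs with even multiplicity. -/
def IsSymplectic (l : ℕ → ℕ) : Prop := ∀ i, Odd i → Even (mult l i)

/-- Orthogonal: every even positive part occurs with even multiplicity. -/
def IsOrthogonal (l : ℕ → ℕ) : Prop := ∀ i, 0 < i → Even i → Even (mult l i)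

/-- Special: `l (2j-1)` and `l (2j)` have the same parity for all `j ≥ 1`. -/
def IsSpecial (l : ℕ → ℕ) : Prop := ∀ j, 1 ≤ j → l (2 * j - 1) % 2 = l (2 * j) % 2

/-- `P^+(λ)`: odd `j` with `λ_j` even and `λ_{j-1} > λ_j` (convention `λ_0 = ∞`). -/
def Pplus (l : ℕ → ℕ) : Set ℕ := {j | Odd j ∧ Even (l j) ∧ (j = 1 ∨ l (j - 1) > l j)}

/-- `P^-(λ)`: even `j ≥ 2` with `λ_j` even and `λ_j > λ_{j+1}`. -/
def Pminus (l : ℕ → ℕ) : Set ℕ := {j | 2 ≤ j ∧ Even j ∧ Even (l j) ∧ l j > l (j + 1)}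

/-- `Q^+(λ)`: even `j ≥ 2` with `λ_j` odd and `λ_{j-1} > λ_j`. -/
def Qplus (l : ℕ → ℕ) : Set ℕ := {j | 2 ≤ j ∧ Even j ∧ Odd (l j) ∧ l (j - 1) > l j}

/-- `Q^-(λ)`: odd `j ≥ 1` with `λ_j` odd and `λ_j > λ_{j+1}`. -/
def Qminus (l : ℕ → ℕ) : Set ℕ := {j | Odd j ∧ Odd (l j) ∧ l j > l (j + 1)}

/-- Orthogonal version of `P^+`: odd `j` with `λ_j` odd and `λ_{j-1} > λ_j` (`λ_0 = ∞`). -/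
def PplusO (l : ℕ → ℕ) : Set ℕ := {j | Odd j ∧ Odd (l j) ∧ (j = 1 ∨ l (j - 1) > l j)}

/-- Orthogonal version of `P^-`: even `j ≥ 2` with `λ_j` odd and `λ_j > λ_{j+1}`. -/
def PminusO (l : ℕ → ℕ) : Set ℕ := {j | 2 ≤ j ∧ Even j ∧ Odd (l j) ∧ l j > l (j + 1)}

/-- The sequence `s(λ)`: `1` on `Q^+`, `-1` on `Q^-`, `0` elsewhere. -/
def sSeq (l : ℕ → ℕ) (j : ℕ) : ℤ :=
  if j ∈ Qplus l then 1 else if j ∈ Qminus l then -1 else 0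

/-- The sequence `ζ(λ)`: `1` on `P^+`, `-1` on `P^-`, `0` elsewhere. -/
def zSeq (l : ℕ → ℕ) (j : ℕ) : ℤ :=
  if j ∈ Pplus l then 1 else if j ∈ Pminus l then -1 else 0

/-- Orthogonal `ζ(λ)`: `1` on `PplusO`, `-1` on `PminusO`, `0` elsewhere. -/
def zSeqO (l : ℕ → ℕ) (j : ℕ) : ℤ :=
  if j ∈ PplusO l then 1 else if j ∈ PminusO l then -1 else 0

/-- `sp(λ) = λ + s(λ)` (termwise, truncated to ℕ). -/
def spPart (l : ℕ → ℕ) (j : ℕ) : ℕ := ((l j : ℤ) + sSeq l j).toNat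

/-- Dominance order on partitions. -/
def Dom (l m : ℕ → ℕ) : Prop :=
  ∀ k, ∑ j ∈ Finset.range k, l (j + 1) ≤ ∑ j ∈ Finset.range k, m (j + 1)

/-- `j_min(i)`: smallest index `j ≥ 1` with `l j = i`. -/
def jminPart (l : ℕ → ℕ) (i : ℕ) : ℕ := sInf {j | 1 ≤ j ∧ l j = i}

/-- `j_max(i)`: largest index `j ≥ 1` with `l j = i`. -/
def jmaxPart (l : ℕ → ℕ) (i : ℕ) : ℕ := sSup {j | 1 ≤ j ∧ l j = i}

/-- `iSeq 1 > iSeq 2 > ... > iSeq t` enumerates the even positive parts of odd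
multiplicity of the symplectic partition `l`, completed by a final `0` if their
number is odd (so that `t` is even). -/
def MarkedSeq (l : ℕ → ℕ) (iSeq : ℕ → ℕ) (t : ℕ) : Prop :=
  Even t ∧
  (∀ h h', 1 ≤ h → h < h' → h' ≤ t → iSeq h' < iSeq h) ∧
  (∀ h, 1 ≤ h → h ≤ t → Even (iSeq h)) ∧
  (∀ h, 1 ≤ h → h ≤ t → iSeq h ≠ 0 → Odd (mult l (iSeq h))) ∧
  (∀ i, 0 < i → Even i → Odd (mult l i) → ∃ h, 1 ≤ h ∧ h ≤ t ∧ iSeq h = i)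

/-- Orthogonal analogue: `iSeq` enumerates the odd parts of odd multiplicity. -/
def MarkedSeqO (l : ℕ → ℕ) (iSeq : ℕ → ℕ) (t : ℕ) : Prop :=
  Even t ∧
  (∀ h h', 1 ≤ h → h < h' → h' ≤ t → iSeq h' < iSeq h) ∧
  (∀ h, 1 ≤ h → h ≤ t → Odd (iSeq h)) ∧
  (∀ h, 1 ≤ h → h ≤ t → Odd (mult l (iSeq h))) ∧
  (∀ i, Odd i → Odd (mult l i) → ∃ h, 1 ≤ h ∧ h ≤ t ∧ iSeq h = i)

/-- `i` lies in the range `[i_{2h}, i_{2h-1}]` for some `h`. -/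
def InRange (iSeq : ℕ → ℕ) (t : ℕ) (i : ℕ) : Prop :=
  ∃ h, 1 ≤ h ∧ 2 * h ≤ t ∧ iSeq (2 * h) ≤ i ∧ i ≤ iSeq (2 * h - 1)

/-- Intervals of a (special symplectic) partition `l`, relative to the marked
sequence `iSeq` of length `t`. -/
def IsItv (l : ℕ → ℕ) (iSeq : ℕ → ℕ) (t : ℕ) (Δ : Set ℕ) : Prop :=
  (∃ h, 1 ≤ h ∧ 2 * h ≤ t ∧
      Δ = {i | (i = 0 ∨ 0 < mult l i) ∧ iSeq (2 * h) ≤ i ∧ i ≤ iSeq (2 * h - 1)}) ∨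
  (∃ i, Even i ∧ (i = 0 ∨ 0 < mult l i) ∧ ¬ InRange iSeq t i ∧ Δ = {i})

/-- Intervals of a (special orthogonal, even) partition `l`. -/
def IsItvO (l : ℕ → ℕ) (iSeq : ℕ → ℕ) (t : ℕ) (Δ : Set ℕ) : Prop :=
  (∃ h, 1 ≤ h ∧ 2 * h ≤ t ∧
      Δ = {i | 0 < mult l i ∧ iSeq (2 * h) ≤ i ∧ i ≤ iSeq (2 * h - 1)}) ∨
  (∃ i, Odd i ∧ 0 < mult l i ∧ ¬ InRange iSeq t i ∧ Δ = {i})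

/-- `J(Δ)`: the set of indices `j ≥ 1` whose part lies in `Δ`. -/
def idxSet (l : ℕ → ℕ) (Δ : Set ℕ) : Set ℕ := {j | 1 ≤ j ∧ l j ∈ Δ}

/-- Good parity at index `j`: `λ_{1,j}` even and `λ_{2,j}` odd. -/
def GoodIdx (l₁ l₂ : ℕ → ℕ) (j : ℕ) : Prop := Even (l₁ j) ∧ Odd (l₂ j)

/-- `J^+`: odd `j` of good parity with a strict decrease at `j-1 → j` for some `d`. -/
def Jplus (l₁ l₂ : ℕ → ℕ) : Set ℕ :=
  {j | Odd j ∧ GoodIdx l₁ l₂ j ∧ (j = 1 ∨ l₁ (j - 1) > l₁ j ∨ l₂ (j - 1) > l₂ j)}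

/-- `J^-`: even `j` of good parity with a strict decrease at `j → j+1` for some `d`. -/
def Jminus (l₁ l₂ : ℕ → ℕ) : Set ℕ :=
  {j | 2 ≤ j ∧ Even j ∧ GoodIdx l₁ l₂ j ∧ (l₁ j > l₁ (j + 1) ∨ l₂ j > l₂ (j + 1))}

/-- The sequence `ξ`: `1` on `J^+`, `-1` on `J^-`, `0` elsewhere. -/
def xiSeq (l₁ l₂ : ℕ → ℕ) (j : ℕ) : ℤ :=
  if j ∈ Jplus l₁ l₂ then 1 else if j ∈ Jminus l₁ l₂ then -1 else 0

/-- The endoscopic induction `λ = λ₁ + λ₂ + ξ` (termwise, truncated to ℕ). -/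
def indPart (l₁ l₂ : ℕ → ℕ) (j : ℕ) : ℕ := ((l₁ j : ℤ) + (l₂ j : ℤ) + xiSeq l₁ l₂ j).toNat

/-- Auxiliary: number of odd parts among the first `k`, as a sum of parities. -/
def cOdd (l : ℕ → ℕ) (k : ℕ) : ℕ := ∑ j ∈ Finset.range k, l (j + 1) % 2

lemma cOdd_succ (l : ℕ → ℕ) (k : ℕ) : cOdd l (k + 1) = cOdd l k + l (k + 1) % 2 := by
  simp [cOdd, Finset.sum_range_succ]

lemma anti_aux {l : ℕ → ℕ} (hpart : IsPartition l) :
    ∀ a b : ℕ, 1 ≤ a → a ≤ b → l b ≤ l a := by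
  intro a b ha hab
  induction b, hab using Nat.le_induction with
  | base => exact le_refl _
  | succ n hn ih => exact le_trans (hpart n (le_trans ha hn)) ih

lemma block_aux {l : ℕ → ℕ} (hpart : IsPartition l) {i k1 : ℕ} (h1 : 1 ≤ k1)
    (hk : l k1 = i) (hlt : l (k1 + 1) < i) :
    ∃ j0, 1 ≤ j0 ∧ j0 ≤ k1 ∧ (j0 = 1 ∨ l j0 < l (j0 - 1)) ∧
      mult l i = k1 + 1 - j0 ∧
      cOdd l k1 = cOdd l (j0 - 1) + (k1 + 1 - j0) * (i % 2) := by
  have hkT : k1 ∈ {j : ℕ | 1 ≤ j ∧ l j = i} := ⟨h1, hk⟩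
  obtain ⟨hj01, hj0i⟩ := Nat.sInf_mem (⟨k1, hkT⟩ : Set.Nonempty {j : ℕ | 1 ≤ j ∧ l j = i})
  set j0 := sInf {j : ℕ | 1 ≤ j ∧ l j = i} with hj0def
  have hj0k : j0 ≤ k1 := Nat.sInf_le hkT
  have hval : ∀ j, j0 ≤ j → j ≤ k1 → l j = i := by
    intro j hj hj'
    have h2 := anti_aux hpart j0 j hj01 hj
    have h3 := anti_aux hpart j k1 (le_trans hj01 hj) hj'
    omega
  have hset : {j : ℕ | 1 ≤ j ∧ l j = i} = ↑(Finset.Icc j0 k1) := by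
    ext j
    simp only [Set.mem_setOf_eq, Finset.coe_Icc, Set.mem_Icc]
    constructor
    · rintro ⟨hj1, hji⟩
      refine ⟨Nat.sInf_le ⟨hj1, hji⟩, ?_⟩
      by_contra hcon
      push_neg at hcon
      have := anti_aux hpart (k1 + 1) j (by omega) (by omega)
      omega
    · rintro ⟨hj1, hj2⟩
      exact ⟨by omega, hval j hj1 hj2⟩
  have hmult : mult l i = k1 + 1 - j0 := by
    simp only [mult]
    rw [hset, Nat.card_coe_set_eq, Set.ncard_coe_finset, Nat.card_Icc]
  have hmin : j0 = 1 ∨ l j0 < l (j0 - 1) := by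
    by_cases h : j0 = 1
    · exact Or.inl h
    · right
      have h2 : j0 - 1 ∉ {j : ℕ | 1 ≤ j ∧ l j = i} := Nat.notMem_of_lt_sInf (by omega)
      simp only [Set.mem_setOf_eq, not_and] at h2
      have h3 := h2 (by omega)
      have h4 := anti_aux hpart (j0 - 1) j0 (by omega) (by omega)
      omega
  refine ⟨j0, hj01, hj0k, hmin, hmult, ?_⟩
  have hsplit := Finset.sum_Ico_consecutive (fun j => l (j + 1) % 2)
    (Nat.zero_le (j0 - 1)) (show j0 - 1 ≤ k1 by omega)
  have hconst : ∑ j ∈ Finset.Ico (j0 - 1) k1, l (j + 1) % 2 = (k1 + 1 - j0) * (i % 2) := by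
    have hcg : ∀ j ∈ Finset.Ico (j0 - 1) k1, l (j + 1) % 2 = i % 2 := by
      intro j hj
      rw [Finset.mem_Ico] at hj
      rw [hval (j + 1) (by omega) (by omega)]
    rw [Finset.sum_congr rfl hcg, Finset.sum_const, Nat.card_Ico, smul_eq_mul]
    congr 1
    omega
  have hranges : cOdd l (j0 - 1) + ∑ j ∈ Finset.Ico (j0 - 1) k1, l (j + 1) % 2 = cOdd l k1 := by
    simp only [cOdd, Finset.range_eq_Ico]
    exact hsplit
  omega

lemma cEven_aux {l : ℕ → ℕ} (hpart : IsPartition l) (hsymp : IsSymplectic l) :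
    ∀ k, l (k + 1) % 2 = 0 ∨ l (k + 1) < l k → cOdd l k % 2 = 0 := by
  intro k
  induction k using Nat.strong_induction_on with
  | _ k ih =>
  intro hyp
  rcases Nat.eq_zero_or_pos k with rfl | hk1
  · simp [cOdd]
  rcases Nat.mod_two_eq_zero_or_one (l k) with hlk | hlk
  · obtain ⟨k', rfl⟩ : ∃ k', k = k' + 1 := ⟨k - 1, by omega⟩
    rw [cOdd_succ]
    have := ih k' (by omega) (Or.inl hlk)
    omega
  · have hlt : l (k + 1) < l k := by
      have h := hpart k hk1
      rcases hyp with h' | h' <;> omega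
    obtain ⟨j0, hj01, hj0k, hmin, hmult, hsum⟩ := block_aux hpart hk1 rfl hlt
    have he : Even (mult l (l k)) := hsymp (l k) (Nat.odd_iff.mpr hlk)
    rw [hmult, Nat.even_iff] at he
    have hc : cOdd l (j0 - 1) % 2 = 0 := by
      rcases hmin with h | h
      · rw [h]
        simp [cOdd]
      · have hj : j0 - 1 + 1 = j0 := by omega
        exact ih (j0 - 1) (by omega) (by rw [hj]; exact Or.inr h)
    rw [hlk, mul_one] at hsum
    omega

lemma cEnd_aux {l : ℕ → ℕ} (hpart : IsPartition l) (hsymp : IsSymplectic l) (k : ℕ)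
    (hb : l (k + 1) % 2 = 1) (hd : l (k + 2) < l (k + 1)) : cOdd l (k + 1) % 2 = 0 := by
  obtain ⟨j0, hj01, hj0k, hmin, hmult, hsum⟩ :=
    block_aux hpart (show 1 ≤ k + 1 by omega) rfl (show l (k + 1 + 1) < l (k + 1) from hd)
  have he : Even (mult l (l (k + 1))) := hsymp (l (k + 1)) (Nat.odd_iff.mpr hb)
  rw [hmult, Nat.even_iff] at he
  have hc : cOdd l (j0 - 1) % 2 = 0 := by
    rcases hmin with h | h
    · rw [h]
      simp [cOdd]
    · have hj : j0 - 1 + 1 = j0 := by omega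
      exact cEven_aux hpart hsymp (j0 - 1) (by rw [hj]; exact Or.inr h)
  rw [hb, mul_one] at hsum
  omega

set_option maxHeartbeats 2000000 in
lemma sval_aux {l : ℕ → ℕ} (hpart : IsPartition l) (hsymp : IsSymplectic l) :
    ∀ k, (∑ j ∈ Finset.range k, sSeq l (j + 1)) =
      if l k % 2 = 1 ∧ (cOdd l k + k) % 2 = 1 ∧ (k % 2 = 0 ∨ l k = l (k + 1)) then 1 else 0 := by
  intro k
  induction k with
  | zero =>
    have hc0 : cOdd l 0 = 0 := by simp [cOdd]
    rw [Finset.sum_range_zero]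
    split_ifs with h <;> omega
  | succ k ih =>
    rw [Finset.sum_range_succ, ih]
    have hcs := cOdd_succ l k
    have hc0 : cOdd l 0 = 0 := by simp [cOdd]
    have hend : l (k + 1) % 2 = 1 → l (k + 1 + 1) < l (k + 1) → cOdd l (k + 1) % 2 = 0 :=
      fun h1 h2 => cEnd_aux hpart hsymp k h1 h2
    have hflat : cOdd l k % 2 = 1 → l k = l (k + 1) ∧ l k % 2 = 1 := by
      intro h
      have hk0 : k ≠ 0 := by
        rintro rfl
        rw [hc0] at h
        omega
      by_cases hor : l (k + 1) % 2 = 0 ∨ l (k + 1) < l k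
      · have := cEven_aux hpart hsymp k hor
        omega
      · push_neg at hor
        have := hpart k (by omega)
        omega
    have heven : l (k + 1) % 2 = 0 → cOdd l k % 2 = 0 :=
      fun h => cEven_aux hpart hsymp k (Or.inl h)
    have hltc : l (k + 1) < l k → cOdd l k % 2 = 0 :=
      fun h => cEven_aux hpart hsymp k (Or.inr h)
    have hm1 : 1 ≤ k → l (k + 1) ≤ l k := fun h => hpart k h
    have hm2 : l (k + 1 + 1) ≤ l (k + 1) := hpart (k + 1) (by omega)
    simp only [sSeq, Qplus, Qminus, Set.mem_setOf_eq, Nat.even_iff, Nat.odd_iff,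
      Nat.add_sub_cancel]
    split_ifs <;> omega

lemma spPart_cast (l : ℕ → ℕ) (j : ℕ) : (spPart l j : ℤ) = (l j : ℤ) + sSeq l j := by
  simp only [spPart]
  rw [Int.toNat_of_nonneg]
  simp only [sSeq]
  split_ifs with h1 h2
  · omega
  · have h3 : l j % 2 = 1 := Nat.odd_iff.mp h2.2.1
    omega
  · omega

lemma special_sum_even {μ : ℕ → ℕ} (hs : IsSpecial μ) (m : ℕ) :
    (∑ j ∈ Finset.range (2 * m), μ (j + 1)) % 2 = 0 := by
  induction m with
  | zero => simp
  | succ m ih =>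
    have h := hs (m + 1) (by omega)
    rw [show 2 * (m + 1) - 1 = 2 * m + 1 by omega, show 2 * (m + 1) = 2 * m + 1 + 1 by omega] at h
    have e1 : ∑ j ∈ Finset.range (2 * m + 1 + 1), μ (j + 1)
        = (∑ j ∈ Finset.range (2 * m + 1), μ (j + 1)) + μ (2 * m + 1 + 1) :=
      Finset.sum_range_succ _ _
    have e2 : ∑ j ∈ Finset.range (2 * m + 1), μ (j + 1)
        = (∑ j ∈ Finset.range (2 * m), μ (j + 1)) + μ (2 * m + 1) :=
      Finset.sum_range_succ _ _
    rw [show 2 * (m + 1) = 2 * m + 1 + 1 by omega, e1, e2]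
    omega

/-- `ν = λ + s(λ)` is the smallest special symplectic partition
dominating `λ`. -/
theorem lambda_add_s_is_sp (n : ℕ) (l : ℕ → ℕ) (hpart : IsPartition l)
    (hzero : EventuallyZero l) (hsum : psum l = 2 * n) (hsymp : IsSymplectic l) :
    Dom l (spPart l) ∧
    ∀ μ : ℕ → ℕ, IsPartition μ → EventuallyZero μ → psum μ = 2 * n →
      IsSymplectic μ → IsSpecial μ → Dom l μ → Dom (spPart l) μ := by
  have hsv := sval_aux hpart hsymp
  have key : ∀ k : ℕ, (∑ j ∈ Finset.range k, (spPart l (j + 1) : ℤ)) =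
      (∑ j ∈ Finset.range k, (l (j + 1) : ℤ)) + ∑ j ∈ Finset.range k, sSeq l (j + 1) := by
    intro k
    rw [← Finset.sum_add_distrib]
    exact Finset.sum_congr rfl fun j _ => spPart_cast l (j + 1)
  constructor
  · intro k
    have h1 : (0 : ℤ) ≤ ∑ j ∈ Finset.range k, sSeq l (j + 1) := by
      rw [hsv k]
      split_ifs <;> norm_num
    have h2 : ((∑ j ∈ Finset.range k, l (j + 1) : ℕ) : ℤ)
        ≤ ((∑ j ∈ Finset.range k, spPart l (j + 1) : ℕ) : ℤ) := by
      push_cast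
      rw [key k]
      omega
    exact_mod_cast h2
  · intro μ hμp hμz hμs hμsy hμsp hdom k
    have h2 : ((∑ j ∈ Finset.range k, spPart l (j + 1) : ℕ) : ℤ)
        ≤ ((∑ j ∈ Finset.range k, μ (j + 1) : ℕ) : ℤ) := by
      push_cast
      rw [key k, hsv k]
      split_ifs with hB
      · obtain ⟨hB1, hB2, hB3⟩ := hB
        have hlt : (∑ j ∈ Finset.range k, l (j + 1)) < ∑ j ∈ Finset.range k, μ (j + 1) := by
          have hparl : (∑ j ∈ Finset.range k, l (j + 1)) % 2 = cOdd l k % 2 := by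
            simp only [cOdd]
            exact Finset.sum_nat_mod _ _ _
          rcases Nat.mod_two_eq_zero_or_one k with hk | hk
          · obtain ⟨m, hm⟩ : ∃ m, k = 2 * m := ⟨k / 2, by omega⟩
            have hμe := special_sum_even hμsp m
            rw [← hm] at hμe
            have hdk := hdom k
            omega
          · obtain ⟨k', rfl⟩ : ∃ k', k = k' + 1 := ⟨k - 1, by omega⟩
            have hab : l (k' + 1) = l (k' + 1 + 1) := by
              rcases hB3 with h | h
              · omega
              · exact h
            obtain ⟨m, hm⟩ : ∃ m, k' = 2 * m := ⟨k' / 2, by omega⟩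
            have hμe := special_sum_even hμsp m
            rw [← hm] at hμe
            have hparl' : (∑ j ∈ Finset.range k', l (j + 1)) % 2 = cOdd l k' % 2 := by
              simp only [cOdd]
              exact Finset.sum_nat_mod _ _ _
            have hcs := cOdd_succ l k'
            have hd1 := hdom k'
            have hd2 := hdom (k' + 1)
            have hd3 := hdom (k' + 1 + 1)
            have e1 : ∑ j ∈ Finset.range (k' + 1 + 1), l (j + 1)
                = (∑ j ∈ Finset.range (k' + 1), l (j + 1)) + l (k' + 1 + 1) :=
              Finset.sum_range_succ _ _
            have e2 : ∑ j ∈ Finset.range (k' + 1 + 1), μ (j + 1)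
                = (∑ j ∈ Finset.range (k' + 1), μ (j + 1)) + μ (k' + 1 + 1) :=
              Finset.sum_range_succ _ _
            have e3 : ∑ j ∈ Finset.range (k' + 1), l (j + 1)
                = (∑ j ∈ Finset.range k', l (j + 1)) + l (k' + 1) :=
              Finset.sum_range_succ _ _
            have e4 : ∑ j ∈ Finset.range (k' + 1), μ (j + 1)
                = (∑ j ∈ Finset.range k', μ (j + 1)) + μ (k' + 1) :=
              Finset.sum_range_succ _ _
            have hμmono : μ (k' + 1 + 1) ≤ μ (k' + 1) := hμp (k' + 1) (by omega)
            omega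
        have h3 : ((∑ j ∈ Finset.range k, l (j + 1) : ℕ) : ℤ)
            < ((∑ j ∈ Finset.range k, μ (j + 1) : ℕ) : ℤ) := by exact_mod_cast hlt
        push_cast at h3
        omega
      · have hdk := hdom k
        have h3 : ((∑ j ∈ Finset.range k, l (j + 1) : ℕ) : ℤ)
            ≤ ((∑ j ∈ Finset.range k, μ (j + 1) : ℕ) : ℤ) := by exact_mod_cast hdk
        push_cast at h3
        omega
    exact_mod_cast h2
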